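/- Let λ = (λ_m)_{m≥1} be a nonincreasing sequence of nonnegative reals with λ_2 > 0 (hence λ_1 > 0), let 1 ≤ a_d ≤ d for each d ≥ 1, b_d = d − a_d, and set ∇_d = {k ∈ ℕ^d : k_1 ≤ … ≤ k_{a_d}} (symmetric setting). For the normalized error criterion define n'(ε',d) = #{k ∈ ∇_d : ∏_{l=1}^d λ_{k_l} > (ε')² · λ_1^d}. Then: (A) there exist C, p > 0 with the counted set finite of cardinality n'(ε',d) ≤ C·(ε')^{−p} for all d ∈ ℕ and ε' ∈ (0,1) (strong polynomial tractability) if and only if Σ_m λ_m^τ < ∞ for some τ > 0, λ_1 > λ_2, and sup_d b_d < ∞. (B) There exist C, p > 0, q ≥ 0 with n'(ε',d) ≤ C·(ε')^{−p}·d^q for all d ∈ ℕ, ε' ∈ (0,1) (polynomial tractability) if and only if Σ_m λ_m^τ < ∞ for some τ > 0 and b_d = O(ln d). -/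

import Mathlib

/-- Multi-indices in `ℕ^d` (entries `≥ 1`) that are nondecreasing along the first `a`
coordinates (the symmetric index set `∇_d`). -/
def symIdx (a d : ℕ) : Set (Fin d → ℕ) :=
  {k | (∀ i, 1 ≤ k i) ∧ ∀ i j : Fin d, i ≤ j → (j : ℕ) < a → k i ≤ k j}

/-- The set counted by the information complexity `n'(ε',d)` of the symmetric problem
with respect to the normalized error criterion (the squared initial error is `λ₁^d`). -/
def symCountN (Λ : ℕ → ℝ) (a : ℕ → ℕ) (d : ℕ) (ε' : ℝ) : Set (Fin d → ℕ) :=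
  {k : Fin d → ℕ | k ∈ symIdx (a d) d ∧ ε' ^ 2 * Λ 1 ^ d < ∏ l, Λ (k l)}


open Finset


lemma card_filter_val (d : ℕ) (p : ℕ → Prop) [DecidablePred p] :
    #(Finset.univ.filter fun i : Fin d => p i.val) = #((Finset.range d).filter p) := by
  refine Finset.card_bij' (fun (i : Fin d) _ => i.val)
      (fun n hn => (⟨n, Finset.mem_range.1 (Finset.mem_filter.1 hn).1⟩ : Fin d))
      ?_ ?_ ?_ ?_
  · intro a ha
    exact Finset.mem_filter.2 ⟨Finset.mem_range.2 a.isLt, (Finset.mem_filter.1 ha).2⟩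
  · intro n hn
    exact Finset.mem_filter.2 ⟨Finset.mem_univ _, (Finset.mem_filter.1 hn).2⟩
  · intro a _; rfl
  · intro n _; rfl

lemma card_filter_lohi {d : ℕ} (lo hi : ℕ) (h : hi ≤ d) :
    #(Finset.univ.filter fun i : Fin d => lo ≤ i.val ∧ i.val < hi) = hi - lo := by
  rw [card_filter_val d (fun n => lo ≤ n ∧ n < hi)]
  rw [show (Finset.range d).filter (fun n => lo ≤ n ∧ n < hi) = Finset.Ico lo hi by
    ext n; simp [Finset.mem_Ico, Finset.mem_range]; omega]
  exact Nat.card_Ico lo hi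

lemma card_filter_lt {d : ℕ} (hi : ℕ) (h : hi ≤ d) :
    #(Finset.univ.filter fun i : Fin d => i.val < hi) = hi := by
  rw [card_filter_val d (fun n => n < hi)]
  rw [show (Finset.range d).filter (fun n => n < hi) = Finset.range hi by
    ext n; simp [Finset.mem_range]; omega]
  exact Finset.card_range hi

lemma le_ncard_of_inj {α γ : Type*} [Fintype γ] {S : Set α} (hS : S.Finite) (g : γ → α)
    (hg : Function.Injective g) (hmem : ∀ x, g x ∈ S) : Fintype.card γ ≤ S.ncard := by
  have hsub : Set.range g ⊆ S := by rintro _ ⟨x, rfl⟩; exact hmem x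
  have h1 : (Set.range g).ncard = Fintype.card γ := by
    rw [← Set.image_univ, Set.ncard_image_of_injective _ hg, Set.ncard_univ,
      Nat.card_eq_fintype_card]
  rw [← h1]
  exact Set.ncard_le_ncard hsub hS

/-- In a block-nondecreasing tuple, the entries `> s` in the block are exactly the
last `j` positions of the block, where `j` is their number. -/
lemma big_iff {d A s j : ℕ} (hA : A ≤ d) {k : Fin d → ℕ}
    (hord : ∀ i i' : Fin d, i ≤ i' → (i' : ℕ) < A → k i ≤ k i')
    (hj : #(Finset.univ.filter fun i : Fin d => i.val < A ∧ s < k i) = j) :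
    ∀ i : Fin d, i.val < A → (s < k i ↔ A - j ≤ i.val) := by
  intro i hiA
  have hjA : j ≤ A := by
    have hle : #(Finset.univ.filter fun i : Fin d => i.val < A ∧ s < k i) ≤
        #(Finset.univ.filter fun i : Fin d => i.val < A) :=
      Finset.card_le_card (fun x hx => by
        simp only [Finset.mem_filter] at *; exact ⟨hx.1, hx.2.1⟩)
    rw [card_filter_lt A hA, hj] at hle
    exact hle
  constructor
  · intro hbig
    have hsub : (Finset.univ.filter fun i' : Fin d => i.val ≤ i'.val ∧ i'.val < A) ⊆
        (Finset.univ.filter fun i' : Fin d => i'.val < A ∧ s < k i') := by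
      intro i' hi'
      simp only [Finset.mem_filter, Finset.mem_univ, true_and] at *
      exact ⟨hi'.2, lt_of_lt_of_le hbig (hord i i' (Fin.le_def.2 hi'.1) hi'.2)⟩
    have := Finset.card_le_card hsub
    rw [card_filter_lohi i.val A hA, hj] at this
    omega
  · intro hge
    by_contra hsmall
    push_neg at hsmall
    have hsub : (Finset.univ.filter fun i' : Fin d => i'.val < A ∧ s < k i') ⊆
        (Finset.univ.filter fun i' : Fin d => i.val + 1 ≤ i'.val ∧ i'.val < A) := by
      intro i' hi'
      simp only [Finset.mem_filter, Finset.mem_univ, true_and] at *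
      refine ⟨?_, hi'.1⟩
      by_contra hle
      push_neg at hle
      exact absurd (le_trans (hord i' i (Fin.le_def.2 (by omega)) hiA) hsmall)
        (not_le.2 hi'.2)
    have := Finset.card_le_card hsub
    rw [card_filter_lohi (i.val + 1) A hA, hj] at this
    omega

/-- In a block-nondecreasing tuple, `k i ≤ v` iff `i` is below the number of such entries. -/
lemma small_iff' {d A : ℕ} (v : ℕ) (hA : A ≤ d) {k : Fin d → ℕ}
    (hord : ∀ i i' : Fin d, i ≤ i' → (i' : ℕ) < A → k i ≤ k i') :
    ∀ i : Fin d, i.val < A →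
      (k i ≤ v ↔ i.val < #(Finset.univ.filter fun i' : Fin d => i'.val < A ∧ k i' ≤ v)) := by
  intro i hiA
  constructor
  · intro hle
    have hsub : (Finset.univ.filter fun i' : Fin d => i'.val < i.val + 1) ⊆
        (Finset.univ.filter fun i' : Fin d => i'.val < A ∧ k i' ≤ v) := by
      intro i' hi'
      simp only [Finset.mem_filter, Finset.mem_univ, true_and] at *
      have h1 : i'.val < A := by omega
      exact ⟨h1, le_trans (hord i' i (Fin.le_def.2 (by omega)) hiA) hle⟩
    have := Finset.card_le_card hsub
    rw [card_filter_lt (i.val + 1) (by omega)] at this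
    omega
  · intro hlt
    by_contra hgt
    push_neg at hgt
    have hsub : (Finset.univ.filter fun i' : Fin d => i'.val < A ∧ k i' ≤ v) ⊆
        (Finset.univ.filter fun i' : Fin d => i'.val < i.val) := by
      intro i' hi'
      simp only [Finset.mem_filter, Finset.mem_univ, true_and] at *
      by_contra hle
      push_neg at hle
      exact absurd (lt_of_lt_of_le hgt (le_trans (hord i i' (Fin.le_def.2 hle) hi'.1) hi'.2))
        (lt_irrefl v)
    have := Finset.card_le_card hsub
    rw [card_filter_lt i.val (by omega)] at this
    omega

/-- Key injectivity: a block-nondecreasing tuple is determined by the number `j` of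
entries `> s` in the block, the counting data `c`, and the censored tuple `v`. -/
lemma key_inj {d A s j : ℕ} (hA : A ≤ d) (hs : 1 ≤ s) {k k' : Fin d → ℕ}
    (hk1 : ∀ i, 1 ≤ k i) (hk1' : ∀ i, 1 ≤ k' i)
    (hord : ∀ i i' : Fin d, i ≤ i' → (i' : ℕ) < A → k i ≤ k i')
    (hord' : ∀ i i' : Fin d, i ≤ i' → (i' : ℕ) < A → k' i ≤ k' i')
    (hj : #(Finset.univ.filter fun i : Fin d => i.val < A ∧ s < k i) = j)
    (hj' : #(Finset.univ.filter fun i : Fin d => i.val < A ∧ s < k' i) = j)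
    (hc : ∀ t' : Fin (s - 1),
      #(Finset.univ.filter fun i : Fin d => i.val < A ∧ k i ≤ t'.val + 1) =
      #(Finset.univ.filter fun i : Fin d => i.val < A ∧ k' i ≤ t'.val + 1))
    (hv : ∀ i : Fin d, (if i.val < A ∧ k i ≤ s then 1 else k i) =
      (if i.val < A ∧ k' i ≤ s then 1 else k' i)) : k = k' := by
  have hbig := big_iff hA hord hj
  have hbig' := big_iff hA hord' hj'
  -- generic one-sided ≤ on the small region
  have main : ∀ (l l' : Fin d → ℕ), (∀ i, 1 ≤ l' i) →
      (∀ i i' : Fin d, i ≤ i' → (i' : ℕ) < A → l i ≤ l i') →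
      (∀ i i' : Fin d, i ≤ i' → (i' : ℕ) < A → l' i ≤ l' i') →
      (∀ t' : Fin (s - 1),
        #(Finset.univ.filter fun i : Fin d => i.val < A ∧ l i ≤ t'.val + 1) =
        #(Finset.univ.filter fun i : Fin d => i.val < A ∧ l' i ≤ t'.val + 1)) →
      ∀ i : Fin d, i.val < A → l i ≤ s → l' i ≤ s → l i ≤ l' i := by
    intro l l' hl1 hlord hlord' hlc i hiA hls hls'
    by_contra hgt
    push_neg at hgt   -- l' i < l i
    have h1 : 1 ≤ l' i := hl1 i
    have hs2 : l' i - 1 < s - 1 := by omega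
    have e := hlc ⟨l' i - 1, hs2⟩
    have hsub1 : l' i - 1 + 1 = l' i := by omega
    simp only [hsub1] at e
    have hi1 := (small_iff' (l' i) hA hlord' i hiA).1 (le_refl _)
    have hi2 := (small_iff' (l' i) hA hlord i hiA).2 (by rw [e]; exact hi1)
    omega
  funext i
  rcases lt_or_ge i.val A with hiA | hiA
  · rcases le_or_gt (A - j) i.val with hge | hlt
    · have b1 : s < k i := (hbig i hiA).2 hge
      have b2 : s < k' i := (hbig' i hiA).2 hge
      have := hv i
      rw [if_neg (by omega), if_neg (by omega)] at this
      exact this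
    · have b1 : k i ≤ s := by
        by_contra hgt; push_neg at hgt
        exact absurd ((hbig i hiA).1 hgt) (by omega)
      have b2 : k' i ≤ s := by
        by_contra hgt; push_neg at hgt
        exact absurd ((hbig' i hiA).1 hgt) (by omega)
      exact le_antisymm (main k k' hk1' hord hord' hc i hiA b1 b2)
        (main k' k hk1 hord' hord (fun t' => (hc t').symm) i hiA b2 b1)
  · have := hv i
    rw [if_neg (by omega), if_neg (by omega)] at this
    exact this

section Patterns
variable {Λ : ℕ → ℝ} {a : ℕ → ℕ}

/-- the `{1,2}`-valued pattern attached to a finite set of positions -/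
def pat {d : ℕ} (T : Finset (Fin d)) : Fin d → ℕ := fun i => if i ∈ T then 2 else 1

lemma pat_inj {d : ℕ} : Function.Injective (pat (d := d)) := by
  intro T T' h
  ext i
  have hi := congrFun h i
  unfold pat at hi
  by_cases h1 : i ∈ T <;> by_cases h2 : i ∈ T' <;>
    simp only [h1, h2, if_pos, if_neg, if_true, if_false] at hi ⊢ <;> omega

lemma prod_pat {d : ℕ} (T : Finset (Fin d)) :
    ∏ l, Λ (pat T l) = Λ 2 ^ #T * Λ 1 ^ (d - #T) := by
  have h1 : ∏ l, Λ (pat T l) = ∏ l : Fin d, (if l ∈ T then Λ 2 else Λ 1) :=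
    Finset.prod_congr rfl (fun l _ => apply_ite Λ _ _ _)
  rw [h1, Finset.prod_ite (fun _ => Λ 2) (fun _ => Λ 1), Finset.prod_const, Finset.prod_const,
    Finset.filter_univ_mem]
  congr 2
  have : Finset.univ.filter (fun x : Fin d => ¬ x ∈ T) = Tᶜ := by
    ext x; simp [Finset.mem_compl]
  rw [this, Finset.card_compl, Fintype.card_fin]

lemma pat_mem_symCountN {d : ℕ} {ε' : ℝ} (T : Finset (Fin d))
    (hord : ∀ i i' : Fin d, i ≤ i' → (i' : ℕ) < a d → i ∈ T → i' ∈ T)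
    (hprod : ε' ^ 2 * Λ 1 ^ d < Λ 2 ^ #T * Λ 1 ^ (d - #T)) :
    pat T ∈ symCountN Λ a d ε' := by
  refine ⟨⟨fun i => ?_, fun i i' hle hlt => ?_⟩, ?_⟩
  · unfold pat; split_ifs <;> omega
  · unfold pat
    by_cases hi : i ∈ T
    · rw [if_pos hi, if_pos (hord i i' hle hlt hi)]
    · rw [if_neg hi]
      split_ifs <;> omega
  · rw [prod_pat]
    exact hprod

/-- the product condition for `{1,2}` patterns in the degenerate case `Λ 2 = Λ 1` -/
lemma pat_prod_eq {d : ℕ} {ε' : ℝ} (h1pos : 0 < Λ 1) (heq : Λ 2 = Λ 1)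
    (hε1 : ε' < 1) (hε0 : 0 < ε') (c : ℕ) (hc : c ≤ d) :
    ε' ^ 2 * Λ 1 ^ d < Λ 2 ^ c * Λ 1 ^ (d - c) := by
  rw [heq, ← pow_add]
  have : c + (d - c) = d := by omega
  rw [this]
  have h1 : ε' ^ 2 < 1 := by nlinarith
  exact mul_lt_of_lt_one_left (pow_pos h1pos d) h1

end Patterns

lemma decay_of_summable (Λ : ℕ → ℝ) (hnn : ∀ m, 0 ≤ Λ m) (τ : ℝ) (hτ : 0 < τ)
    (hsum : Summable fun m : ℕ => Λ (m+1) ^ τ) :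
    ∀ ε : ℝ, 0 < ε → ∃ K : ℕ, ∀ m, K < m → Λ m ≤ ε := by
  intro ε hε
  have h0 := hsum.tendsto_atTop_zero
  have hev : ∀ᶠ m in Filter.atTop, Λ (m+1) ^ τ < ε ^ τ :=
    h0.eventually_lt_const (Real.rpow_pos_of_pos hε τ)
  obtain ⟨K, hK⟩ := Filter.eventually_atTop.1 hev
  refine ⟨K, fun m hm => ?_⟩
  have h1 : Λ ((m-1)+1) ^ τ < ε ^ τ := hK (m-1) (by omega)
  have h2 : (m-1)+1 = m := by omega
  rw [h2] at h1
  by_contra hgt; push_neg at hgt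
  exact absurd (Real.rpow_le_rpow hε.le hgt.le hτ.le) (not_le.2 h1)

lemma summable_of_d1_bound (Λ : ℕ → ℝ) (hnn : ∀ m, 0 ≤ Λ m)
    (hmono : ∀ m n : ℕ, 1 ≤ m → m ≤ n → Λ n ≤ Λ m) (h1pos : 0 < Λ 1)
    (a : ℕ → ℕ) (C p : ℝ) (hC : 0 < C) (hp : 0 < p)
    (H : ∀ ε' : ℝ, 0 < ε' → ε' < 1 → (symCountN Λ a 1 ε').Finite ∧
      ((symCountN Λ a 1 ε').ncard : ℝ) ≤ C * ε' ^ (-p)) :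
    Summable fun m : ℕ => Λ (m+1) ^ p := by
  have key : ∀ m : ℕ, 1 ≤ m → Λ m ^ p ≤ (Λ 1 ^ p * 2 ^ p * C^2) * (1 / (m:ℝ)^2) := by
    intro m hm
    have hmR : (0:ℝ) < (m:ℝ) := by exact_mod_cast hm
    by_cases hΛ0 : Λ m = 0
    · rw [hΛ0, Real.zero_rpow hp.ne']
      have p1 : (0:ℝ) < Λ 1 ^ p := Real.rpow_pos_of_pos h1pos p
      have p2 : (0:ℝ) < (2:ℝ) ^ p := Real.rpow_pos_of_pos two_pos p
      positivity
    · have hΛpos : 0 < Λ m := lt_of_le_of_ne (hnn m) (Ne.symm hΛ0)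
      set μ := Λ m / Λ 1 with hμ
      have hμpos : 0 < μ := div_pos hΛpos h1pos
      have hμ1 : μ ≤ 1 := (div_le_one h1pos).2 (hmono 1 m le_rfl hm)
      set ε' := Real.sqrt (μ/2) with hε'
      have hε0 : 0 < ε' := Real.sqrt_pos.2 (by positivity)
      have hε1 : ε' < 1 := by
        have := Real.sqrt_lt_sqrt (by positivity : (0:ℝ) ≤ μ/2) (by linarith : μ/2 < 1)
        rwa [Real.sqrt_one] at this
      have hsq : ε' ^ 2 = μ / 2 := Real.sq_sqrt (by positivity)
      obtain ⟨hfin, hbound⟩ := H ε' hε0 hε1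
      have hmem : ∀ v : Fin m, (fun _ : Fin 1 => v.val + 1) ∈ symCountN Λ a 1 ε' := by
        intro v
        refine ⟨⟨fun i => by show 1 ≤ v.val + 1; omega, fun i j hle hlt => ?_⟩, ?_⟩
        · have : i = j := Subsingleton.elim i j
          rw [this]
        · rw [Fin.prod_univ_one, pow_one, hsq]
          have h1 : μ / 2 * Λ 1 = Λ m / 2 := by
            field_simp [hμ]
            rw [hμ, div_mul_cancel₀ _ h1pos.ne']
          rw [h1]
          have h2 : Λ m ≤ Λ (v.val + 1) := hmono (v.val+1) m (by omega) (by omega)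
          linarith
      have hinj : Function.Injective (fun (v : Fin m) (_ : Fin 1) => v.val + 1) := by
        intro v v' h
        have h0 : v.val + 1 = v'.val + 1 := congrFun h 0
        exact Fin.ext (by omega)
      have hle := le_ncard_of_inj hfin _ hinj hmem
      rw [Fintype.card_fin] at hle
      have hle' : (m:ℝ) ≤ C * ε' ^ (-p) := le_trans (by exact_mod_cast hle) hbound
      have hx : ε' ^ (-p) = ((μ/2) ^ (p/2:ℝ))⁻¹ := by
        rw [hε', Real.sqrt_eq_rpow, ← Real.rpow_mul (by positivity),
          show (1/2 : ℝ) * (-p) = -(p/2) by ring, Real.rpow_neg (by positivity)]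
      set x := (μ/2) ^ (p/2 : ℝ) with hxdef
      have hxpos : 0 < x := Real.rpow_pos_of_pos (by positivity) _
      have hmx : (m:ℝ) * x ≤ C := by
        rw [hx] at hle'
        calc (m:ℝ) * x ≤ (C * x⁻¹) * x := mul_le_mul_of_nonneg_right hle' hxpos.le
          _ = C := by field_simp
      have hxC : x ≤ C / m := by
        rw [le_div_iff₀ hmR]
        linarith [hmx]
      have hμp : μ ^ p = x^2 * 2 ^ p := by
        have e1 : μ = (μ/2) * 2 := by ring
        rw [show μ ^ p = ((μ/2) * 2) ^ p by rw [← e1],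
          Real.mul_rpow (by positivity) (by norm_num)]
        congr 1
        rw [hxdef, ← Real.rpow_natCast ((μ/2)^(p/2:ℝ)) 2, ← Real.rpow_mul (by positivity)]
        congr 1
        push_cast; ring
      have hΛm : Λ m ^ p = μ ^ p * Λ 1 ^ p := by
        rw [← Real.mul_rpow (by positivity) h1pos.le]
        congr 1
        field_simp [hμ]
        rw [hμ, div_mul_cancel₀ _ h1pos.ne']
      rw [hΛm, hμp]
      have hx2 : x^2 ≤ (C/m)^2 := pow_le_pow_left₀ hxpos.le hxC 2
      have h2p : (0:ℝ) < (2:ℝ)^p := Real.rpow_pos_of_pos two_pos p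
      have hΛ1p : (0:ℝ) < Λ 1 ^ p := Real.rpow_pos_of_pos h1pos p
      calc x^2 * 2^p * Λ 1^p ≤ (C/m)^2 * 2^p * Λ 1 ^ p :=
            mul_le_mul_of_nonneg_right (mul_le_mul_of_nonneg_right hx2 h2p.le) hΛ1p.le
        _ = (Λ 1^p * 2^p * C^2) * (1/(m:ℝ)^2) := by
            field_simp
  have hsum2 : Summable (fun m : ℕ => (Λ 1^p*2^p*C^2) * (1/((m:ℝ)+1)^2)) := by
    apply Summable.mul_left
    have h := (Real.summable_one_div_nat_pow (p := 2)).2 one_lt_two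
    have h2 := (summable_nat_add_iff 1).2 h
    convert h2 using 2 with n
    rfl
    push_cast
    ring
  apply Summable.of_nonneg_of_le (fun m => Real.rpow_nonneg (hnn _) p) (fun m => ?_) hsum2
  have := key (m+1) (by omega)
  convert this using 3
  push_cast
  ring


section Fams
variable {Λ : ℕ → ℝ} {a : ℕ → ℕ}

lemma lb_fam1 (h1pos : 0 < Λ 1) (heq : Λ 2 = Λ 1) {d : ℕ} (hd : 1 ≤ d) (had : a d ≤ d)
    {ε' : ℝ} (hε0 : 0 < ε') (hε1 : ε' < 1) (hfin : (symCountN Λ a d ε').Finite) :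
    a d + 1 ≤ (symCountN Λ a d ε').ncard := by
  set A := a d with hA
  have hTinj : Function.Injective
      (fun t : Fin (A+1) => Finset.univ.filter fun i : Fin d => A - t.val ≤ i.val ∧ i.val < A) := by
    intro t t' h
    have h1 := congrArg Finset.card h
    rw [card_filter_lohi (A - t.val) A had, card_filter_lohi (A - t'.val) A had] at h1
    have := t.isLt
    have := t'.isLt
    exact Fin.ext (by omega)
  have := le_ncard_of_inj hfin (fun t : Fin (A+1) =>
    pat (Finset.univ.filter fun i : Fin d => A - t.val ≤ i.val ∧ i.val < A))
    (pat_inj.comp hTinj) (fun t => ?_)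
  · rwa [Fintype.card_fin] at this
  · refine pat_mem_symCountN _ (fun i i' hle hlt hi => ?_) ?_
    · rw [Finset.mem_filter] at hi ⊢
      refine ⟨Finset.mem_univ _, ?_, hlt⟩
      have := Fin.le_def.1 hle
      omega
    · exact pat_prod_eq h1pos heq hε1 hε0 _
        (le_trans (Finset.card_filter_le _ _) (by rw [Finset.card_univ, Fintype.card_fin]))

lemma lb_fam2 (h1pos : 0 < Λ 1) (heq : Λ 2 = Λ 1) {d : ℕ} (hd : 1 ≤ d) (had : a d ≤ d)
    {ε' : ℝ} (hε0 : 0 < ε') (hε1 : ε' < 1) (hfin : (symCountN Λ a d ε').Finite) :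
    2 ^ (d - a d) ≤ (symCountN Λ a d ε').ncard := by
  set A := a d with hA
  have hTinj : Function.Injective
      (fun e : Fin (2^(d-A)) => Finset.univ.filter
        fun i : Fin d => A ≤ i.val ∧ Nat.testBit e.val (i.val - A)) := by
    intro e e' h
    refine Fin.ext (Nat.eq_of_testBit_eq fun n => ?_)
    rcases lt_or_ge n (d - A) with hn | hn
    · have hi : A + n < d := by omega
      have h2 := Finset.ext_iff.1 h ⟨A + n, hi⟩
      simp only [Finset.mem_filter, Finset.mem_univ, true_and, Fin.val_mk] at h2
      have hAn : A + n - A = n := by omega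
      rw [hAn] at h2
      have h3 : (Nat.testBit e.val n = true) ↔ (Nat.testBit e'.val n = true) := by
        constructor
        · intro hb; exact (h2.1 ⟨by omega, hb⟩).2
        · intro hb; exact (h2.2 ⟨by omega, hb⟩).2
      rw [Bool.eq_iff_iff]
      exact h3
    · have he : e.val < 2 ^ n := lt_of_lt_of_le e.isLt (Nat.pow_le_pow_right (by norm_num) hn)
      have he' : e'.val < 2 ^ n := lt_of_lt_of_le e'.isLt (Nat.pow_le_pow_right (by norm_num) hn)
      rw [Nat.testBit_eq_false_of_lt he, Nat.testBit_eq_false_of_lt he']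
  have := le_ncard_of_inj hfin (fun e : Fin (2^(d-A)) =>
    pat (Finset.univ.filter fun i : Fin d => A ≤ i.val ∧ Nat.testBit e.val (i.val - A)))
    (pat_inj.comp hTinj) (fun e => ?_)
  · rwa [Fintype.card_fin] at this
  · refine pat_mem_symCountN _ (fun i i' hle hlt hi => ?_) ?_
    · rw [Finset.mem_filter] at hi
      have := Fin.le_def.1 hle
      omega
    · exact pat_prod_eq h1pos heq hε1 hε0 _
        (le_trans (Finset.card_filter_le _ _) (by rw [Finset.card_univ, Fintype.card_fin]))

lemma lb_fam3 (h1pos : 0 < Λ 1) (h2pos : 0 < Λ 2)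
    (hmono : ∀ m n : ℕ, 1 ≤ m → m ≤ n → Λ n ≤ Λ m)
    {d : ℕ} (hd : 1 ≤ d) (had : a d ≤ d)
    {ε' : ℝ} (hε0 : 0 < ε') (hεsq : ε' ^ 2 = Λ 2 / Λ 1 / 2)
    (hfin : (symCountN Λ a d ε').Finite) :
    (d - a d) + 1 ≤ (symCountN Λ a d ε').ncard := by
  set A := a d with hA
  set b := d - A with hb
  have hTinj : Function.Injective
      (fun t : Fin (b+1) => Finset.univ.filter fun i : Fin d => i.val = A + t.val) := by
    intro t t' h
    have h' := Finset.ext_iff.1 h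
    rcases lt_or_ge t.val b with ht | ht
    · have hi : A + t.val < d := by omega
      have h2 := h' ⟨A + t.val, hi⟩
      simp only [Finset.mem_filter, Finset.mem_univ, true_and, Fin.val_mk] at h2
      have h3 := h2.1 trivial
      exact Fin.ext (by omega)
    · rcases lt_or_ge t'.val b with ht' | ht'
      · have hi : A + t'.val < d := by omega
        have h2 := h' ⟨A + t'.val, hi⟩
        simp only [Finset.mem_filter, Finset.mem_univ, true_and, Fin.val_mk] at h2
        have h3 := h2.2 trivial
        exact Fin.ext (by omega)
      · have h1 := t.isLt
        have h2 := t'.isLt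
        exact Fin.ext (by omega)
  have := le_ncard_of_inj hfin (fun t : Fin (b+1) =>
    pat (Finset.univ.filter fun i : Fin d => i.val = A + t.val))
    (pat_inj.comp hTinj) (fun t => ?_)
  · rwa [Fintype.card_fin] at this
  · refine pat_mem_symCountN _ (fun i i' hle hlt hi => ?_) ?_
    · rw [Finset.mem_filter] at hi
      omega
    · -- card ≤ 1
      have hcle : #(Finset.univ.filter fun i : Fin d => i.val = A + t.val) ≤ 1 := by
        refine Finset.card_le_one.2 (fun i hi i' hi' => ?_)
        rw [Finset.mem_filter] at hi hi'
        exact Fin.ext (by omega)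
      have hμ2 : Λ 2 / Λ 1 ≤ 1 := (div_le_one h1pos).2 (hmono 1 2 le_rfl (by norm_num))
      have hpowd : (0:ℝ) < Λ 1 ^ d := pow_pos h1pos d
      interval_cases hcc : #(Finset.univ.filter fun i : Fin d => i.val = A + t.val)
      · rw [pow_zero, one_mul, Nat.sub_zero]
        have : ε' ^ 2 < 1 := by rw [hεsq]; linarith
        exact mul_lt_of_lt_one_left hpowd this
      · rw [pow_one]
        have e : Λ 1 ^ d = Λ 1 * Λ 1 ^ (d-1) := by
          rw [← pow_succ']
          congr 1
          omega
        rw [hεsq, e]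
        have hpow1 : (0:ℝ) < Λ 1 ^ (d-1) := pow_pos h1pos (d-1)
        have : Λ 2 / Λ 1 / 2 * (Λ 1 * Λ 1 ^ (d-1)) = Λ 2 * Λ 1 ^ (d-1) / 2 := by
          field_simp
        rw [this]
        have hq : 0 < Λ 2 * Λ 1 ^ (d-1) := mul_pos h2pos hpow1
        linarith

lemma div_unique {m l l' u v : ℕ} (hu : u < m) (hv : v < m)
    (h : l*m + u = l'*m + v) : l = l' ∧ u = v := by
  rcases lt_trichotomy l l' with hl | hl | hl
  · have : l*m + u < l'*m + v := by
      calc l*m + u < l*m + m := by omega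
        _ = (l+1)*m := by ring
        _ ≤ l'*m := Nat.mul_le_mul_right m hl
        _ ≤ l'*m + v := by omega
    omega
  · subst hl; omega
  · have : l'*m + v < l*m + u := by
      calc l'*m + v < l'*m + m := by omega
        _ = (l'+1)*m := by ring
        _ ≤ l*m := Nat.mul_le_mul_right m hl
        _ ≤ l*m + u := by omega
    omega

lemma lb_fam4 (h1pos : 0 < Λ 1) {d : ℕ} (hd : 1 ≤ d) (had : a d ≤ d)
    (j m : ℕ) (hj : 1 ≤ j) (hjm : j * m ≤ d - a d)
    {ε' : ℝ} (hε : ε' ^ 2 * Λ 1 ^ d < Λ 2 ^ j * Λ 1 ^ (d - j))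
    (hfin : (symCountN Λ a d ε').Finite) :
    m ^ j ≤ (symCountN Λ a d ε').ncard := by
  set A := a d with hA
  have hpos : ∀ (x : Fin j → Fin m) (l : Fin j), A + l.val * m + (x l).val < d := by
    intro x l
    have h1 : l.val * m + (x l).val < j * m := by
      calc l.val * m + (x l).val < l.val * m + m := by omega
        _ = (l.val + 1) * m := by ring
        _ ≤ j * m := Nat.mul_le_mul_right m l.isLt
    omega
  set Tf : (Fin j → Fin m) → Finset (Fin d) := fun x =>
    Finset.image (fun l : Fin j => (⟨A + l.val * m + (x l).val, hpos x l⟩ : Fin d))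
      Finset.univ with hTf
  have hposinj : ∀ x : Fin j → Fin m, Function.Injective
      (fun l : Fin j => (⟨A + l.val * m + (x l).val, hpos x l⟩ : Fin d)) := by
    intro x l l' h
    have h1 : A + l.val * m + (x l).val = A + l'.val * m + (x l').val :=
      congrArg Fin.val h
    have h3 : l.val * m + (x l).val = l'.val * m + (x l').val := by omega
    have h2 := div_unique (x l).isLt (x l').isLt h3
    exact Fin.ext h2.1
  have hTinj : Function.Injective Tf := by
    intro x y h
    funext l
    have h1 : (⟨A + l.val * m + (x l).val, hpos x l⟩ : Fin d) ∈ Tf y := by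
      rw [← h]
      exact Finset.mem_image.2 ⟨l, Finset.mem_univ _, rfl⟩
    obtain ⟨l', _, hl'⟩ := Finset.mem_image.1 h1
    have h2 : A + l'.val * m + (y l').val = A + l.val * m + (x l).val :=
      congrArg Fin.val hl'
    have h4 : l'.val * m + (y l').val = l.val * m + (x l).val := by omega
    have h3 := div_unique (y l').isLt (x l).isLt h4
    have hll : l' = l := Fin.ext h3.1
    rw [hll] at h3
    exact Fin.ext h3.2.symm
  have hcard : ∀ x, #(Tf x) = j := by
    intro x
    rw [hTf]
    rw [Finset.card_image_of_injective _ (hposinj x), Finset.card_univ, Fintype.card_fin]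
  have := le_ncard_of_inj hfin (fun x => pat (Tf x)) (pat_inj.comp hTinj) (fun x => ?_)
  · rwa [Fintype.card_fun, Fintype.card_fin, Fintype.card_fin] at this
  · refine pat_mem_symCountN _ (fun i i' hle hlt hi => ?_) ?_
    · obtain ⟨l, _, hl⟩ := Finset.mem_image.1 hi
      have hval : A + l.val * m + (x l).val = i.val := congrArg Fin.val hl
      have hle' := Fin.le_def.1 hle
      omega
    · rw [hcard x]
      exact hε

end Fams

lemma choose_t (Λ : ℕ → ℝ) (hnn : ∀ m, 0 ≤ Λ m)
    (hmono : ∀ m n : ℕ, 1 ≤ m → m ≤ n → Λ n ≤ Λ m) (h1pos : 0 < Λ 1)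
    (τ0 : ℝ) (hτ0 : 0 < τ0) (hsum : Summable fun m : ℕ => Λ (m+1) ^ τ0)
    (s : ℕ) (hs : 1 ≤ s) (hls : Λ (s+1) < Λ 1) :
    ∃ t : ℝ, 0 < t ∧ ∀ K : ℕ, ∑ x ∈ Finset.Icc (s+1) K, (Λ x / Λ 1) ^ t ≤ 1/2 := by
  have hsumΛ : Summable fun m : ℕ => Λ m ^ τ0 := (summable_nat_add_iff 1).1 hsum
  set M := ∑' m : ℕ, Λ m ^ τ0 with hM
  have hMnn : 0 ≤ M := tsum_nonneg (fun m => Real.rpow_nonneg (hnn m) τ0)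
  set M1 := M / Λ 1 ^ τ0 + 1 with hM1
  have hM1pos : 0 < M1 := by
    have h0 : 0 ≤ M / Λ 1 ^ τ0 := div_nonneg hMnn (Real.rpow_pos_of_pos h1pos τ0).le
    rw [hM1]
    linarith
  set r := Λ (s+1) / Λ 1 with hr
  have hr0 : 0 ≤ r := div_nonneg (hnn _) h1pos.le
  have hr1 : r < 1 := (div_lt_one h1pos).2 hls
  have htd := tendsto_pow_atTop_nhds_zero_of_lt_one hr0 hr1
  have hev : ∀ᶠ n in Filter.atTop, r^n < (1/2)/M1 :=
    htd.eventually_lt_const (by positivity)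
  obtain ⟨n, hn⟩ := Filter.eventually_atTop.1 hev
  have hrn : r ^ n < (1/2)/M1 := hn n le_rfl
  refine ⟨τ0 + n, by positivity, fun K => ?_⟩
  have hterm : ∀ x ∈ Finset.Icc (s+1) K, (Λ x / Λ 1) ^ (τ0 + (n:ℝ)) ≤
      r^n * (Λ x / Λ 1) ^ τ0 := by
    intro x hx
    rw [Finset.mem_Icc] at hx
    by_cases hx0 : Λ x = 0
    · rw [hx0, zero_div, Real.zero_rpow (by positivity : (0:ℝ) < τ0 + n).ne',
        Real.zero_rpow hτ0.ne', mul_zero]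
    · have hxpos : 0 < Λ x := lt_of_le_of_ne (hnn x) (Ne.symm hx0)
      have hqpos : 0 < Λ x / Λ 1 := div_pos hxpos h1pos
      rw [Real.rpow_add hqpos, Real.rpow_natCast]
      have hqr : Λ x / Λ 1 ≤ r := by
        rw [hr]
        gcongr
        exact hmono (s+1) x (by omega) hx.1
      have hpow : (Λ x / Λ 1)^n ≤ r^n := pow_le_pow_left₀ hqpos.le hqr n
      calc (Λ x / Λ 1) ^ τ0 * (Λ x / Λ 1)^n ≤ (Λ x / Λ 1) ^ τ0 * r^n :=
            mul_le_mul_of_nonneg_left hpow (Real.rpow_nonneg hqpos.le τ0)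
        _ = r^n * (Λ x / Λ 1) ^ τ0 := by ring
  have hsle : ∑ x ∈ Finset.Icc (s+1) K, (Λ x / Λ 1) ^ τ0 ≤ M1 := by
    have e : ∀ x ∈ Finset.Icc (s+1) K, (Λ x / Λ 1)^τ0 = Λ x ^ τ0 / Λ 1 ^ τ0 :=
      fun x _ => Real.div_rpow (hnn x) h1pos.le τ0
    rw [Finset.sum_congr rfl e, ← Finset.sum_div]
    have h1 : ∑ x ∈ Finset.Icc (s+1) K, Λ x ^ τ0 ≤ M :=
      hsumΛ.sum_le_tsum _ (fun i _ => Real.rpow_nonneg (hnn i) τ0)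
    have h2 : (∑ x ∈ Finset.Icc (s+1) K, Λ x ^ τ0) / Λ 1 ^ τ0 ≤ M / Λ 1 ^ τ0 := by
      gcongr
    rw [hM1]
    linarith
  calc ∑ x ∈ Finset.Icc (s+1) K, (Λ x / Λ 1) ^ (τ0 + (n:ℝ)) ≤
        ∑ x ∈ Finset.Icc (s+1) K, r^n * (Λ x / Λ 1) ^ τ0 := Finset.sum_le_sum hterm
    _ = r^n * ∑ x ∈ Finset.Icc (s+1) K, (Λ x / Λ 1) ^ τ0 := by rw [Finset.mul_sum]
    _ ≤ r^n * M1 := mul_le_mul_of_nonneg_left hsle (pow_nonneg hr0 n)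
    _ ≤ ((1/2)/M1) * M1 := mul_le_mul_of_nonneg_right hrn.le hM1pos.le
    _ = 1/2 := div_mul_cancel₀ _ hM1pos.ne'

private theorem UB (Λ : ℕ → ℝ) (hnn : ∀ m, 0 ≤ Λ m)
    (hmono : ∀ m n : ℕ, 1 ≤ m → m ≤ n → Λ n ≤ Λ m) (h1pos : 0 < Λ 1)
    (a : ℕ → ℕ) (t : ℝ) (ht : 0 < t) (s : ℕ) (hs : 1 ≤ s)
    (htail : ∀ K : ℕ, ∑ x ∈ Finset.Icc (s+1) K, (Λ x / Λ 1) ^ t ≤ 1/2)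
    (hdecay : ∀ ε : ℝ, 0 < ε → ∃ K : ℕ, ∀ m, K < m → Λ m ≤ ε)
    (d : ℕ) (hd : 1 ≤ d) (had : a d ≤ d) (ε' : ℝ) (hε0 : 0 < ε') (hε1 : ε' < 1) :
    (symCountN Λ a d ε').Finite ∧
      ((symCountN Λ a d ε').ncard : ℝ) ≤
        ε' ^ (-(2*t)) * (2 * ((d:ℝ)+1)^(s-1) * ((s:ℝ)+1)^(d - a d)) := by
  set A := a d with hA
  set ν : ℕ → ℝ := fun x => (Λ x / Λ 1) ^ t with hνdef
  have hν0 : ∀ x, 0 ≤ ν x := fun x => Real.rpow_nonneg (div_nonneg (hnn x) h1pos.le) t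
  have hν1 : ∀ x, 1 ≤ x → ν x ≤ 1 := fun x hx =>
    Real.rpow_le_one (div_nonneg (hnn x) h1pos.le)
      ((div_le_one h1pos).2 (hmono 1 x le_rfl hx)) ht.le
  have hν1eq : ν 1 = 1 := by
    simp only [hνdef, div_self h1pos.ne', Real.one_rpow]
  obtain ⟨K0, hK0⟩ := hdecay (ε' ^ 2 * Λ 1) (by positivity)
  set K := max K0 s with hKdef
  have hKs : s ≤ K := le_max_right _ _
  have hKbound : ∀ m, K < m → Λ m ≤ ε' ^ 2 * Λ 1 := fun m hm =>
    hK0 m (lt_of_le_of_lt (le_max_left _ _) hm)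
  -- entries of counted indices are bounded by K
  have hmem_le : ∀ k ∈ symCountN Λ a d ε', ∀ i, 1 ≤ k i ∧ k i ≤ K := by
    intro k hk i
    obtain ⟨⟨hk1, hkord⟩, hkprod⟩ := hk
    refine ⟨hk1 i, ?_⟩
    by_contra hgt
    push_neg at hgt
    have h1 : Λ (k i) ≤ ε' ^ 2 * Λ 1 := hKbound _ hgt
    have h2 : ∏ l, Λ (k l) = Λ (k i) * ∏ l ∈ Finset.univ.erase i, Λ (k l) :=
      (Finset.mul_prod_erase _ _ (Finset.mem_univ i)).symm
    have h3 : ∏ l ∈ Finset.univ.erase i, Λ (k l) ≤ Λ 1 ^ (d - 1) := by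
      calc ∏ l ∈ Finset.univ.erase i, Λ (k l) ≤ ∏ _l ∈ Finset.univ.erase i, Λ 1 :=
            Finset.prod_le_prod (fun l _ => hnn _) (fun l _ => hmono 1 _ le_rfl (hk1 l))
        _ = Λ 1 ^ (d - 1) := by
            rw [Finset.prod_const, Finset.card_erase_of_mem (Finset.mem_univ i),
              Finset.card_univ, Fintype.card_fin]
    have h4 : ∏ l, Λ (k l) ≤ (ε' ^ 2 * Λ 1) * Λ 1 ^ (d - 1) := by
      rw [h2]
      exact mul_le_mul h1 h3 (Finset.prod_nonneg fun l _ => hnn _) (by positivity)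
    have h5 : (ε' ^ 2 * Λ 1) * Λ 1 ^ (d - 1) = ε' ^ 2 * Λ 1 ^ d := by
      rw [mul_assoc, ← pow_succ']
      congr 2
      omega
    rw [h5] at h4
    linarith
  classical
  set T : Finset (Fin d → ℕ) :=
    (Fintype.piFinset fun _ : Fin d => Finset.Icc 1 K).filter
      (fun k => ∀ i j : Fin d, i ≤ j → (j : ℕ) < A → k i ≤ k j) with hTdef
  have hsubT : ∀ k ∈ symCountN Λ a d ε', k ∈ T := by
    intro k hk
    refine Finset.mem_filter.2 ⟨Fintype.mem_piFinset.2 fun i => Finset.mem_Icc.2 ?_, hk.1.2⟩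
    exact hmem_le k hk i
  set S : Finset (Fin d → ℕ) := T.filter (fun k => ε' ^ 2 * Λ 1 ^ d < ∏ l, Λ (k l)) with hSdef
  have hset : symCountN Λ a d ε' = ↑S := by
    ext k
    constructor
    · intro hk
      exact Finset.mem_coe.2 (Finset.mem_filter.2 ⟨hsubT k hk, hk.2⟩)
    · intro hk
      obtain ⟨hkT, hkP⟩ := Finset.mem_filter.1 (Finset.mem_coe.1 hk)
      obtain ⟨hkpi, hkord⟩ := Finset.mem_filter.1 hkT
      exact ⟨⟨fun i => (Finset.mem_Icc.1 (Fintype.mem_piFinset.1 hkpi i)).1, hkord⟩, hkP⟩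
  have hfin : (symCountN Λ a d ε').Finite := by rw [hset]; exact S.finite_toSet
  refine ⟨hfin, ?_⟩
  rw [hset, Set.ncard_coe_finset]
  -- Markov inequality
  have hw : ∀ k ∈ S, (ε' ^ 2) ^ t ≤ ∏ i, ν (k i) := by
    intro k hkS
    obtain ⟨hkT, hkP⟩ := Finset.mem_filter.1 hkS
    obtain ⟨hkpi, hkord⟩ := Finset.mem_filter.1 hkT
    have hlt : ε' ^ 2 ≤ ∏ i, (Λ (k i) / Λ 1) := by
      rw [Finset.prod_div_distrib, Finset.prod_const, Finset.card_univ, Fintype.card_fin]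
      exact le_of_lt ((lt_div_iff₀ (pow_pos h1pos d)).2 hkP)
    calc (ε' ^ 2) ^ t ≤ (∏ i, (Λ (k i) / Λ 1)) ^ t :=
          Real.rpow_le_rpow (sq_nonneg ε') hlt ht.le
      _ = ∏ i, ν (k i) :=
          (Real.finset_prod_rpow Finset.univ _ (fun i _ => div_nonneg (hnn _) h1pos.le) t).symm
  have hcard : (S.card : ℝ) * (ε' ^ 2) ^ t ≤ ∑ k ∈ S, ∏ i, ν (k i) := by
    have := Finset.card_nsmul_le_sum S (fun k => ∏ i, ν (k i)) ((ε' ^ 2) ^ t) hw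
    rwa [nsmul_eq_mul] at this
  have hTsum : ∑ k ∈ S, ∏ i, ν (k i) ≤ ∑ k ∈ T, ∏ i, ν (k i) :=
    Finset.sum_le_sum_of_subset_of_nonneg (Finset.filter_subset _ _)
      (fun k _ _ => Finset.prod_nonneg fun i _ => hν0 _)
  -- the main combinatorial estimate
  have hmain : ∑ k ∈ T, ∏ i, ν (k i) ≤ 2 * ((d:ℝ)+1)^(s-1) * ((s:ℝ)+1)^(d - A) := by
    set Jc : (Fin d → ℕ) → ℕ :=
      fun k => #(Finset.univ.filter fun i : Fin d => i.val < A ∧ s < k i) with hJcdef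
    have hmaps : ∀ k ∈ T, Jc k ∈ Finset.range (A+1) := by
      intro k _
      refine Finset.mem_range.2 ?_
      have hle : Jc k ≤ #(Finset.univ.filter fun i : Fin d => i.val < A) :=
        Finset.card_le_card (fun x hx => by
          simp only [Finset.mem_filter] at *
          exact ⟨hx.1, hx.2.1⟩)
      rw [card_filter_lt A had] at hle
      omega
    rw [← Finset.sum_fiberwise_of_maps_to hmaps (fun k => ∏ i, ν (k i))]
    have innerB : ∀ j ∈ Finset.range (A+1),
        ∑ k ∈ T.filter (fun k => Jc k = j), ∏ i, ν (k i) ≤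
        ((d:ℝ)+1)^(s-1) * ((s:ℝ)+1)^(d - A) * (1/2)^j := by
      intro j hjr
      have hjA : j ≤ A := by
        have := Finset.mem_range.1 hjr; omega
      set φ : (Fin d → ℕ) → ((Fin (s-1) → ℕ) × (Fin d → ℕ)) :=
        fun k => (fun t' => #(Finset.univ.filter fun i : Fin d => i.val < A ∧ k i ≤ t'.val + 1),
                  fun i => if i.val < A ∧ k i ≤ s then 1 else k i) with hφdef
      set cell : Fin d → Finset ℕ := fun i =>
        if i.val < A - j then Finset.Icc 1 1
        else if i.val < A then Finset.Icc (s+1) K else Finset.Icc 1 K with hcelldef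
      set Sj := T.filter (fun k => Jc k = j) with hSjdef
      -- properties of members of Sj
      have hSjmem : ∀ k ∈ Sj, (∀ i, 1 ≤ k i ∧ k i ≤ K) ∧
          (∀ i i' : Fin d, i ≤ i' → (i' : ℕ) < A → k i ≤ k i') ∧ Jc k = j := by
        intro k hk
        obtain ⟨hkT, hkJ⟩ := Finset.mem_filter.1 hk
        obtain ⟨hkpi, hkord⟩ := Finset.mem_filter.1 hkT
        exact ⟨fun i => Finset.mem_Icc.1 (Fintype.mem_piFinset.1 hkpi i), hkord, hkJ⟩
      have step1 : ∑ k ∈ Sj, ∏ i, ν (k i) ≤ ∑ k ∈ Sj, ∏ i, ν ((φ k).2 i) := by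
        refine Finset.sum_le_sum ?_
        intro k hk
        obtain ⟨hk1, _, _⟩ := hSjmem k hk
        refine Finset.prod_le_prod (fun i _ => hν0 _) (fun i _ => ?_)
        by_cases hcase : i.val < A ∧ k i ≤ s
        · simp only [hφdef, if_pos hcase]
          rw [hν1eq]
          exact hν1 _ (hk1 i).1
        · simp only [hφdef, if_neg hcase]
          exact le_rfl
      have hinj : ∀ x ∈ Sj, ∀ y ∈ Sj, φ x = φ y → x = y := by
        intro x hx y hy hxy
        obtain ⟨hx1, hxord, hxJ⟩ := hSjmem x hx
        obtain ⟨hy1, hyord, hyJ⟩ := hSjmem y hy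
        have h1 := congrArg Prod.fst hxy
        have h2 := congrArg Prod.snd hxy
        exact key_inj had hs (fun i => (hx1 i).1) (fun i => (hy1 i).1) hxord hyord hxJ hyJ
          (fun t' => congrFun h1 t') (fun i => congrFun h2 i)
      have step2 : ∑ k ∈ Sj, ∏ i, ν ((φ k).2 i) = ∑ y ∈ Sj.image φ, ∏ i, ν (y.2 i) :=
        (Finset.sum_image (f := fun y : (Fin (s-1) → ℕ) × (Fin d → ℕ) => ∏ i, ν (y.2 i)) hinj).symm
      set U := (Fintype.piFinset fun _ : Fin (s-1) => Finset.range (d+1)) ×ˢ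
        Fintype.piFinset cell with hUdef
      have himg : Sj.image φ ⊆ U := by
        intro y hy
        obtain ⟨k, hkSj, rfl⟩ := Finset.mem_image.1 hy
        obtain ⟨hk1, hkord, hkJ⟩ := hSjmem k hkSj
        refine Finset.mem_product.2 ⟨Fintype.mem_piFinset.2 fun t' => ?_,
          Fintype.mem_piFinset.2 fun i => ?_⟩
        · show #(Finset.univ.filter fun i : Fin d => i.val < A ∧ k i ≤ t'.val + 1) ∈ Finset.range (d+1)
          refine Finset.mem_range.2 ?_
          have hle : #(Finset.univ.filter fun i : Fin d => i.val < A ∧ k i ≤ t'.val + 1) ≤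
              #(Finset.univ : Finset (Fin d)) := Finset.card_filter_le _ _
          rw [Finset.card_univ, Fintype.card_fin] at hle
          omega
        · have hbig := big_iff had hkord hkJ i
          rcases lt_or_ge i.val (A - j) with hsmall | hge
          · have hiA : i.val < A := by omega
            have hks : k i ≤ s := by
              by_contra hgt; push_neg at hgt
              have := (hbig hiA).1 hgt
              omega
            simp only [hφdef, hcelldef, if_pos (And.intro hiA hks), if_pos hsmall]
            exact Finset.mem_Icc.2 ⟨le_rfl, le_rfl⟩
          · rcases lt_or_ge i.val A with hiA | hiA
            · have hkbig : s < k i := (hbig hiA).2 hge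
              simp only [hφdef, hcelldef, if_neg (by omega : ¬ i.val < A - j), if_pos hiA,
                if_neg (show ¬ (i.val < A ∧ k i ≤ s) by omega)]
              exact Finset.mem_Icc.2 ⟨by omega, (hk1 i).2⟩
            · simp only [hφdef, hcelldef, if_neg (by omega : ¬ i.val < A - j),
                if_neg (show ¬ i.val < A by omega),
                if_neg (show ¬ (i.val < A ∧ k i ≤ s) by omega)]
              exact Finset.mem_Icc.2 ⟨(hk1 i).1, (hk1 i).2⟩
      have step3 : ∑ y ∈ Sj.image φ, ∏ i, ν (y.2 i) ≤ ∑ y ∈ U, ∏ i, ν (y.2 i) :=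
        Finset.sum_le_sum_of_subset_of_nonneg himg
          (fun y _ _ => Finset.prod_nonneg fun i _ => hν0 _)
      have step4 : ∑ y ∈ U, ∏ i, ν (y.2 i) =
          ((d:ℝ)+1)^(s-1) * ∑ v ∈ Fintype.piFinset cell, ∏ i, ν (v i) := by
        rw [hUdef, Finset.sum_product]
        dsimp only
        rw [Finset.sum_const, nsmul_eq_mul]
        congr 1
        rw [Fintype.card_piFinset]
        push_cast [Finset.card_range]
        rw [Finset.prod_const, Finset.card_univ, Fintype.card_fin]
      have step5 : ∑ v ∈ Fintype.piFinset cell, ∏ i, ν (v i) =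
          ∏ i, ∑ x ∈ cell i, ν x :=
        (Finset.prod_univ_sum cell (fun _ x => ν x)).symm
      set B : Fin d → ℝ := fun i =>
        if i.val < A - j then 1 else if i.val < A then (1/2:ℝ) else ((s:ℝ)+1) with hBdef
      have step6 : ∏ i, ∑ x ∈ cell i, ν x ≤ ∏ i, B i := by
        refine Finset.prod_le_prod (fun i _ => Finset.sum_nonneg fun x _ => hν0 _)
          (fun i _ => ?_)
        simp only [hcelldef, hBdef]
        split_ifs with h1 h2
        · rw [Finset.Icc_self, Finset.sum_singleton, hν1eq]
        · exact htail K
        · have hsplit : ∑ x ∈ Finset.Icc 1 K, ν x ≤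
              ∑ x ∈ Finset.Icc 1 s, ν x + ∑ x ∈ Finset.Icc (s+1) K, ν x := by
            rw [← Finset.sum_union (by
              rw [Finset.disjoint_left]
              intro x hx hx'
              rw [Finset.mem_Icc] at hx hx'
              omega)]
            refine Finset.sum_le_sum_of_subset_of_nonneg ?_ (fun x _ _ => hν0 _)
            intro x hx
            rw [Finset.mem_Icc] at hx
            rw [Finset.mem_union, Finset.mem_Icc, Finset.mem_Icc]
            omega
          have hIcc1s : ∑ x ∈ Finset.Icc 1 s, ν x ≤ s := by
            have := Finset.sum_le_card_nsmul (Finset.Icc 1 s) ν 1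
              (fun x hx => hν1 x (Finset.mem_Icc.1 hx).1)
            rw [Nat.card_Icc, nsmul_eq_mul, mul_one] at this
            calc ∑ x ∈ Finset.Icc 1 s, ν x ≤ ((s + 1 - 1 : ℕ) : ℝ) := this
              _ = (s:ℝ) := by norm_num
          have := htail K
          linarith
      have step7 : ∏ i, B i = (1/2:ℝ)^j * ((s:ℝ)+1)^(d - A) := by
        rw [hBdef, Finset.prod_ite (fun _ => (1:ℝ)) _, Finset.prod_const_one, one_mul,
          Finset.prod_ite (fun _ => (1/2:ℝ)) (fun _ => ((s:ℝ)+1)), Finset.prod_const,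
          Finset.prod_const, Finset.filter_filter, Finset.filter_filter]
        have e1 : (Finset.univ.filter fun i : Fin d => ¬ i.val < A - j ∧ i.val < A) =
            (Finset.univ.filter fun i : Fin d => A - j ≤ i.val ∧ i.val < A) := by
          apply Finset.filter_congr
          intro i _
          constructor
          · rintro ⟨h1, h2⟩; omega
          · rintro ⟨h1, h2⟩; omega
        have e2 : (Finset.univ.filter fun i : Fin d => ¬ i.val < A - j ∧ ¬ i.val < A) =
            (Finset.univ.filter fun i : Fin d => A ≤ i.val ∧ i.val < d) := by
          apply Finset.filter_congr
          intro i _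
          constructor
          · rintro ⟨h1, h2⟩; exact ⟨by omega, i.isLt⟩
          · rintro ⟨h1, h2⟩; omega
        rw [e1, e2, card_filter_lohi (A - j) A had, card_filter_lohi A d le_rfl]
        have : A - (A - j) = j := by omega
        rw [this]
      calc ∑ k ∈ Sj, ∏ i, ν (k i) ≤ ∑ y ∈ U, ∏ i, ν (y.2 i) :=
            le_trans step1 (le_of_le_of_eq (le_of_eq step2) rfl |>.trans step3)
        _ = ((d:ℝ)+1)^(s-1) * ∑ v ∈ Fintype.piFinset cell, ∏ i, ν (v i) := step4
        _ ≤ ((d:ℝ)+1)^(s-1) * ((1/2:ℝ)^j * ((s:ℝ)+1)^(d - A)) := by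
            refine mul_le_mul_of_nonneg_left ?_ (by positivity)
            rw [step5]
            exact le_of_le_of_eq step6 step7
        _ = ((d:ℝ)+1)^(s-1) * ((s:ℝ)+1)^(d - A) * (1/2)^j := by ring
    calc ∑ j ∈ Finset.range (A+1), ∑ k ∈ T.filter (fun k => Jc k = j), ∏ i, ν (k i) ≤
          ∑ j ∈ Finset.range (A+1), ((d:ℝ)+1)^(s-1) * ((s:ℝ)+1)^(d - A) * (1/2)^j :=
          Finset.sum_le_sum innerB
      _ = ((d:ℝ)+1)^(s-1) * ((s:ℝ)+1)^(d - A) * ∑ j ∈ Finset.range (A+1), (1/2:ℝ)^j := by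
          rw [← Finset.mul_sum]
      _ ≤ ((d:ℝ)+1)^(s-1) * ((s:ℝ)+1)^(d - A) * 2 := by
          refine mul_le_mul_of_nonneg_left ?_ (by positivity)
          rw [geom_sum_eq (by norm_num : (1/2:ℝ) ≠ 1)]
          rw [div_le_iff_of_neg (by norm_num : (1/2:ℝ) - 1 < 0)]
          have := pow_nonneg (by norm_num : (0:ℝ) ≤ 1/2) (A+1)
          linarith
      _ = 2 * ((d:ℝ)+1)^(s-1) * ((s:ℝ)+1)^(d - A) := by ring
  -- put things together
  have hppos : (0:ℝ) < (ε' ^ 2) ^ t := Real.rpow_pos_of_pos (by positivity) t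
  have hrp : ε' ^ (-(2*t)) = ((ε' ^ 2) ^ t)⁻¹ := by
    rw [← Real.rpow_natCast ε' 2, ← Real.rpow_mul hε0.le, ← Real.rpow_neg hε0.le]
    norm_num
  rw [hrp]
  rw [inv_mul_eq_div, le_div_iff₀ hppos]
  calc (S.card : ℝ) * (ε' ^ 2) ^ t ≤ ∑ k ∈ T, ∏ i, ν (k i) := le_trans hcard hTsum
    _ ≤ 2 * ((d:ℝ)+1)^(s-1) * ((s:ℝ)+1)^(d - A) := hmain

set_option maxHeartbeats 2000000 in
/-- Characterization of (strong) polynomial tractability of symmetric tensor product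
problems with respect to the normalized error criterion.  Here `b_d = d - a_d`. -/
theorem stmt_8
    (Λ : ℕ → ℝ) (hnn : ∀ m, 0 ≤ Λ m)
    (hmono : ∀ m n : ℕ, 1 ≤ m → m ≤ n → Λ n ≤ Λ m) (h2 : 0 < Λ 2)
    (a : ℕ → ℕ) (ha : ∀ d : ℕ, 1 ≤ d → 1 ≤ a d ∧ a d ≤ d) :
    -- (A) strong polynomial tractability
    ((∃ C p : ℝ, 0 < C ∧ 0 < p ∧ ∀ d : ℕ, 1 ≤ d → ∀ ε' : ℝ, 0 < ε' → ε' < 1 →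
        (symCountN Λ a d ε').Finite ∧
          ((symCountN Λ a d ε').ncard : ℝ) ≤ C * ε' ^ (-p)) ↔
      ((∃ τ : ℝ, 0 < τ ∧ Summable (fun m : ℕ => Λ (m + 1) ^ τ)) ∧
        Λ 2 < Λ 1 ∧ (∃ B : ℕ, ∀ d : ℕ, 1 ≤ d → d - a d ≤ B))) ∧
    -- (B) polynomial tractability
    ((∃ C p q : ℝ, 0 < C ∧ 0 < p ∧ 0 ≤ q ∧ ∀ d : ℕ, 1 ≤ d → ∀ ε' : ℝ, 0 < ε' → ε' < 1 →
        (symCountN Λ a d ε').Finite ∧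
          ((symCountN Λ a d ε').ncard : ℝ) ≤ C * ε' ^ (-p) * (d : ℝ) ^ q) ↔
      ((∃ τ : ℝ, 0 < τ ∧ Summable (fun m : ℕ => Λ (m + 1) ^ τ)) ∧
        (∃ c : ℝ, 0 < c ∧ ∀ d : ℕ, 2 ≤ d → ((d - a d : ℕ) : ℝ) ≤ c * Real.log d))) := by
  have h21 : Λ 2 ≤ Λ 1 := hmono 1 2 le_rfl (by norm_num)
  have h1pos : 0 < Λ 1 := lt_of_lt_of_le h2 h21
  constructor
  · constructor
    · rintro ⟨C, p, hC, hp, H⟩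
      have hsum : Summable fun m : ℕ => Λ (m + 1) ^ p :=
        summable_of_d1_bound Λ hnn hmono h1pos a C p hC hp (fun ε' h0 h1 => H 1 le_rfl ε' h0 h1)
      have hΛ21 : Λ 2 < Λ 1 := by
        by_contra hlt
        push_neg at hlt
        have heq : Λ 2 = Λ 1 := le_antisymm h21 hlt
        set C' := C * ((1:ℝ)/2) ^ (-p) with hC'
        have hC'pos : 0 < C' := mul_pos hC (Real.rpow_pos_of_pos one_half_pos _)
        set d := ⌈2 * C'⌉₊ + 1 with hd
        have hd1 : 1 ≤ d := by omega
        obtain ⟨hfin, hbound⟩ := H d hd1 (1/2) one_half_pos one_half_lt_one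
        have hf1 := lb_fam1 (Λ := Λ) (a := a) h1pos heq hd1 (ha d hd1).2
          one_half_pos one_half_lt_one hfin
        have hf2 := lb_fam2 (Λ := Λ) (a := a) h1pos heq hd1 (ha d hd1).2
          one_half_pos one_half_lt_one hfin
        have hA : ((a d : ℝ)) + 1 ≤ C' := by
          have h5 := le_trans (Nat.cast_le.2 hf1) hbound
          rw [← hC'] at h5
          push_cast at h5
          linarith
        have hBb : ((d - a d : ℕ) : ℝ) + 1 ≤ C' := by
          have h2pow : (d - a d) + 1 ≤ 2 ^ (d - a d) := Nat.lt_two_pow_self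
          have h5 := le_trans (Nat.cast_le.2 (le_trans h2pow hf2)) hbound
          rw [← hC'] at h5
          push_cast at h5
          linarith
        have hdle : (d : ℝ) ≤ 2 * C' := by
          have hcast : (d:ℝ) = (a d : ℝ) + ((d - a d : ℕ) : ℝ) := by
            rw [Nat.cast_sub (ha d hd1).2]; ring
          linarith
        have hcontr : 2 * C' < (d : ℝ) := by
          rw [hd]
          push_cast
          have := Nat.le_ceil (2 * C')
          linarith
        linarith
      refine ⟨⟨p, hp, hsum⟩, hΛ21, ?_⟩
      -- bounded b_d
      set ε' := Real.sqrt (Λ 2 / Λ 1 / 2) with hε'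
      have hμpos : 0 < Λ 2 / Λ 1 / 2 := by positivity
      have hε0 : 0 < ε' := Real.sqrt_pos.2 hμpos
      have hεsq : ε' ^ 2 = Λ 2 / Λ 1 / 2 := Real.sq_sqrt hμpos.le
      have hε1 : ε' < 1 := by
        have hμ1 : Λ 2 / Λ 1 / 2 < 1 := by
          have : Λ 2 / Λ 1 ≤ 1 := (div_le_one h1pos).2 h21
          linarith
        have := Real.sqrt_lt_sqrt hμpos.le hμ1
        rwa [Real.sqrt_one] at this
      refine ⟨⌈C * ε' ^ (-p)⌉₊, fun d hd1 => ?_⟩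
      obtain ⟨hfin, hbound⟩ := H d hd1 ε' hε0 hε1
      have hf3 := lb_fam3 (Λ := Λ) (a := a) h1pos h2 hmono hd1 (ha d hd1).2 hε0 hεsq hfin
      have h5 : ((d - a d : ℕ) : ℝ) + 1 ≤ C * ε' ^ (-p) := by
        have := le_trans (Nat.cast_le.2 hf3) hbound
        push_cast at this
        linarith
      have h6 : ((d - a d : ℕ) : ℝ) ≤ (⌈C * ε' ^ (-p)⌉₊ : ℝ) :=
        le_trans (by linarith) (Nat.le_ceil _)
      exact_mod_cast h6
    · rintro ⟨⟨τ0, hτ0, hsum⟩, hΛ21, B, hB⟩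
      have hdecay := decay_of_summable Λ hnn τ0 hτ0 hsum
      obtain ⟨t, ht, htail⟩ := choose_t Λ hnn hmono h1pos τ0 hτ0 hsum 1 le_rfl
        (by simpa using hΛ21)
      refine ⟨2 * 2 ^ B, 2 * t, by positivity, by positivity, fun d hd1 ε' hε0 hε1 => ?_⟩
      obtain ⟨hfin, hbound⟩ := UB Λ hnn hmono h1pos a t ht 1 le_rfl htail hdecay d hd1
        (ha d hd1).2 ε' hε0 hε1
      refine ⟨hfin, le_trans hbound ?_⟩
      have hεp : (0:ℝ) < ε' ^ (-(2 * t)) := Real.rpow_pos_of_pos hε0 _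
      have hb : d - a d ≤ B := hB d hd1
      have h2b : ((1:ℕ):ℝ) + 1 = 2 := by norm_num
      calc ε' ^ (-(2*t)) * (2 * ((d:ℝ)+1)^(1-1) * (((1:ℕ):ℝ)+1)^(d - a d))
          = ε' ^ (-(2*t)) * (2 * (2:ℝ)^(d - a d)) := by rw [h2b]; norm_num
        _ ≤ ε' ^ (-(2*t)) * (2 * (2:ℝ)^B) := by
            have := pow_le_pow_right₀ (by norm_num : (1:ℝ) ≤ 2) hb
            have h4 : 2 * (2:ℝ)^(d - a d) ≤ 2 * (2:ℝ)^B := by linarith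
            exact mul_le_mul_of_nonneg_left h4 hεp.le
        _ = 2 * 2^B * ε' ^ (-(2*t)) := by ring
  · constructor
    · rintro ⟨C, p, q, hC, hp, hq, H⟩
      have hsum : Summable fun m : ℕ => Λ (m + 1) ^ p := by
        refine summable_of_d1_bound Λ hnn hmono h1pos a C p hC hp (fun ε' h0 h1 => ?_)
        obtain ⟨hfin, hbound⟩ := H 1 le_rfl ε' h0 h1
        refine ⟨hfin, ?_⟩
        simpa using hbound
      refine ⟨⟨p, hp, hsum⟩, ?_⟩
      by_cases heq : Λ 2 = Λ 1
      · -- degenerate case: use the 2^b family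
        set K0 := C * ((1:ℝ)/2) ^ (-p) with hK0
        have hK0pos : 0 < K0 := mul_pos hC (Real.rpow_pos_of_pos one_half_pos _)
        have hlog2 : 0 < Real.log 2 := Real.log_pos one_lt_two
        set cc := max (Real.log K0) 0 / (Real.log 2)^2 + q / Real.log 2 + 1 with hcc
        have t1 : 0 ≤ max (Real.log K0) 0 / (Real.log 2)^2 :=
          div_nonneg (le_max_right _ _) (by positivity)
        have t2 : 0 ≤ q / Real.log 2 := div_nonneg hq hlog2.le
        have hccpos : 0 < cc := by rw [hcc]; linarith
        refine ⟨cc, hccpos, fun d hd2 => ?_⟩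
        have hd1 : 1 ≤ d := by omega
        obtain ⟨hfin, hbound⟩ := H d hd1 (1/2) one_half_pos one_half_lt_one
        have hf2 := lb_fam2 (Λ := Λ) (a := a) h1pos heq hd1 (ha d hd1).2
          one_half_pos one_half_lt_one hfin
        have hdpos : (0:ℝ) < (d:ℝ) := by
          have : (2:ℝ) ≤ (d:ℝ) := by exact_mod_cast hd2
          linarith
        have hb2 : (2:ℝ) ^ (d - a d) ≤ K0 * (d:ℝ)^q := by
          have h5 := le_trans (Nat.cast_le.2 hf2) hbound
          rw [← hK0] at h5
          push_cast at h5
          exact h5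
        have hlog := Real.log_le_log (by positivity) hb2
        rw [Real.log_pow] at hlog
        have hlogK : Real.log (K0 * (d:ℝ)^q) = Real.log K0 + q * Real.log d := by
          rw [Real.log_mul hK0pos.ne' (Real.rpow_pos_of_pos hdpos q).ne',
            Real.log_rpow hdpos]
        rw [hlogK] at hlog
        have hld : Real.log 2 ≤ Real.log d := Real.log_le_log two_pos (by exact_mod_cast hd2)
        have hldpos : 0 < Real.log d := lt_of_lt_of_le hlog2 hld
        set b' := ((d - a d : ℕ) : ℝ) with hb'
        -- hlog : b' * log 2 ≤ log K0 + q * log d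
        have h5 : b' * Real.log 2 ≤
            (max (Real.log K0) 0 / Real.log 2) * Real.log d + q * Real.log d := by
          have e1 : Real.log K0 ≤ max (Real.log K0) 0 := le_max_left _ _
          have e2 : max (Real.log K0) 0 ≤ (max (Real.log K0) 0 / Real.log 2) * Real.log d := by
            rw [div_mul_eq_mul_div, le_div_iff₀ hlog2]
            nlinarith [le_max_right (Real.log K0) 0]
          linarith
        have h6 : b' ≤ (max (Real.log K0) 0 / Real.log 2 * Real.log d + q * Real.log d) /
            Real.log 2 := by
          rw [le_div_iff₀ hlog2]
          linarith
        have h7 : (max (Real.log K0) 0 / Real.log 2 * Real.log d + q * Real.log d) /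
            Real.log 2 = (max (Real.log K0) 0 / (Real.log 2)^2 + q / Real.log 2) *
            Real.log d := by
          field_simp
        rw [h7] at h6
        have h8 : (max (Real.log K0) 0 / (Real.log 2)^2 + q / Real.log 2) * Real.log d ≤
            cc * Real.log d := by
          rw [hcc]
          nlinarith
        exact le_trans h6 h8
      · -- Λ 2 < Λ 1 : use the block family
        have hΛ21 : Λ 2 < Λ 1 := lt_of_le_of_ne h21 heq
        set μ := Λ 2 / Λ 1 with hμ
        have hμpos : 0 < μ := div_pos h2 h1pos
        have hμ1 : μ < 1 := (div_lt_one h1pos).2 hΛ21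
        set C4 := max C 1 * μ ^ (-p) * Real.exp q + 1 with hC4
        have hC4base : 0 < max C 1 * μ ^ (-p) * Real.exp q := by
          have := Real.rpow_pos_of_pos hμpos (-p)
          have := Real.exp_pos q
          have : (0:ℝ) < max C 1 := lt_of_lt_of_le one_pos (le_max_right _ _)
          positivity
        have hC4pos : 0 < C4 := by rw [hC4]; linarith
        refine ⟨3 * C4, by linarith, fun d hd2 => ?_⟩
        have hd1 : 1 ≤ d := by omega
        have hdR : (2:ℝ) ≤ (d:ℝ) := by exact_mod_cast hd2
        have hdpos : (0:ℝ) < (d:ℝ) := by linarith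
        have hldpos : 0 < Real.log d := Real.log_pos (by linarith)
        set j := ⌈Real.log d⌉₊ with hjdef
        have hj1 : 1 ≤ j := Nat.ceil_pos.2 hldpos
        have hjpos : (0:ℝ) < (j:ℝ) := by exact_mod_cast hj1
        have hjld : Real.log d ≤ (j:ℝ) := Nat.le_ceil _
        have hjle : (j:ℝ) ≤ Real.log d + 1 := le_of_lt (Nat.ceil_lt_add_one hldpos.le)
        have hld2 : Real.log 2 ≤ Real.log d := Real.log_le_log two_pos hdR
        have hldhalf : (1/2:ℝ) < Real.log d := by
          have := Real.log_two_gt_d9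
          linarith
        have hj3 : (j:ℝ) ≤ 3 * Real.log d := by linarith
        rcases lt_or_ge (d - a d) j with hbj | hjb
        · -- b < j
          have hC4ge1 : 1 ≤ C4 := by rw [hC4]; linarith
          have hcast : ((d - a d : ℕ):ℝ) ≤ (j:ℝ) := by exact_mod_cast hbj.le
          calc ((d - a d : ℕ):ℝ) ≤ (j:ℝ) := hcast
            _ ≤ 3 * Real.log d := hj3
            _ ≤ 3 * C4 * Real.log d := by nlinarith
        · -- j ≤ b
          set m := (d - a d) / j with hmdef
          have hjm : j * m ≤ d - a d := by
            rw [hmdef]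
            exact Nat.mul_div_le _ _
          set ε' := Real.sqrt (μ^(j+1)) with hε'
          have hppos : 0 < μ^(j+1) := pow_pos hμpos _
          have hε0 : 0 < ε' := Real.sqrt_pos.2 hppos
          have hεsq : ε' ^ 2 = μ^(j+1) := Real.sq_sqrt hppos.le
          have hε1 : ε' < 1 := by
            have h5 : μ^(j+1) < 1 := pow_lt_one₀ hμpos.le hμ1 (by omega)
            have := Real.sqrt_lt_sqrt hppos.le h5
            rwa [Real.sqrt_one] at this
          obtain ⟨hfin, hbound⟩ := H d hd1 ε' hε0 hε1
          have hprodineq : ε' ^ 2 * Λ 1 ^ d < Λ 2 ^ j * Λ 1 ^ (d - j) := by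
            have hjd : j ≤ d := by omega
            have e : Λ 2 ^ j * Λ 1 ^ (d - j) = μ ^ j * Λ 1 ^ d := by
              have e2 : Λ 1 ^ d = Λ 1 ^ (d - j) * Λ 1 ^ j := by
                rw [← pow_add]
                congr 1
                omega
              rw [hμ, div_pow, e2]
              field_simp
            rw [hεsq, e]
            exact mul_lt_mul_of_pos_right
              (pow_lt_pow_right_of_lt_one₀ hμpos hμ1 (by omega)) (pow_pos h1pos d)
          have h4 := lb_fam4 (Λ := Λ) (a := a) h1pos hd1 (ha d hd1).2 j m hj1 hjm
            hprodineq hfin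
          have hmj : ((m:ℝ))^j ≤ C * ε' ^ (-p) * (d:ℝ)^q := by
            have := le_trans (Nat.cast_le.2 h4) hbound
            push_cast at this
            exact this
          set R := C * ε' ^ (-p) * (d:ℝ)^q with hR
          have hRpos : 0 < R := by
            have := Real.rpow_pos_of_pos hε0 (-p)
            have := Real.rpow_pos_of_pos hdpos q
            positivity
          have hmle : (m:ℝ) ≤ R ^ ((1:ℝ)/j) := by
            have base : (0:ℝ) ≤ (m:ℝ) := Nat.cast_nonneg m
            have h5 := Real.rpow_le_rpow (pow_nonneg base j) hmj
              (show (0:ℝ) ≤ 1/(j:ℝ) by positivity)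
            rwa [show ((m:ℝ)^j) ^ ((1:ℝ)/j) = (m:ℝ) by
              rw [← Real.rpow_natCast (m:ℝ) j, ← Real.rpow_mul base,
                mul_one_div_cancel hjpos.ne', Real.rpow_one]] at h5
          have hsplit : R ^ ((1:ℝ)/j) =
              C ^ ((1:ℝ)/j) * (ε' ^ (-p)) ^ ((1:ℝ)/j) * ((d:ℝ)^q) ^ ((1:ℝ)/j) := by
            rw [hR, Real.mul_rpow (by positivity) (Real.rpow_pos_of_pos hdpos q).le,
              Real.mul_rpow hC.le (Real.rpow_pos_of_pos hε0 (-p)).le]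
          have hC1 : C ^ ((1:ℝ)/j) ≤ max C 1 := by
            rcases le_or_gt C 1 with h' | h'
            · exact le_trans (Real.rpow_le_one hC.le h' (by positivity)) (le_max_right _ _)
            · refine le_trans (Real.rpow_le_rpow_of_exponent_le h'.le
                (show (1:ℝ)/j ≤ 1 by
                  rw [div_le_one hjpos]
                  exact_mod_cast hj1)) ?_
              rw [Real.rpow_one]
              exact le_max_left _ _
          have hεpart : (ε' ^ (-p)) ^ ((1:ℝ)/j) ≤ μ ^ (-p) := by
            have hεr : ε' = μ ^ (((j:ℝ)+1)/2) := by
              rw [hε', Real.sqrt_eq_rpow, ← Real.rpow_natCast μ (j+1),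
                ← Real.rpow_mul hμpos.le]
              congr 1
              push_cast
              ring
            rw [hεr, ← Real.rpow_mul hμpos.le, ← Real.rpow_mul hμpos.le]
            apply Real.rpow_le_rpow_of_exponent_ge hμpos hμ1.le
            have hjR : (1:ℝ) ≤ (j:ℝ) := by exact_mod_cast hj1
            have key : ((j:ℝ)+1)/2 * (-p) * (1/(j:ℝ)) = -(((j:ℝ)+1)*p/(2*(j:ℝ))) := by
              field_simp
            rw [key, neg_le_neg_iff]
            rw [div_le_iff₀ (by positivity)]
            nlinarith
          have hdpart : ((d:ℝ)^q) ^ ((1:ℝ)/j) ≤ Real.exp q := by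
            rw [← Real.rpow_mul hdpos.le, Real.rpow_def_of_pos hdpos]
            apply Real.exp_le_exp.2
            have h5 : Real.log d / (j:ℝ) ≤ 1 := by
              rw [div_le_one hjpos]
              exact hjld
            have h6 : Real.log d * (q * (1/(j:ℝ))) = q * (Real.log d / (j:ℝ)) := by ring
            rw [h6]
            nlinarith
          have hm4 : (m:ℝ) ≤ max C 1 * μ ^ (-p) * Real.exp q := by
            calc (m:ℝ) ≤ R ^ ((1:ℝ)/j) := hmle
              _ = C ^ ((1:ℝ)/j) * (ε' ^ (-p)) ^ ((1:ℝ)/j) * ((d:ℝ)^q) ^ ((1:ℝ)/j) := hsplit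
              _ ≤ max C 1 * μ ^ (-p) * Real.exp q := by
                  have n1 : (0:ℝ) ≤ (ε' ^ (-p)) ^ ((1:ℝ)/j) :=
                    (Real.rpow_pos_of_pos (Real.rpow_pos_of_pos hε0 (-p)) _).le
                  have n2 : (0:ℝ) ≤ ((d:ℝ)^q) ^ ((1:ℝ)/j) :=
                    (Real.rpow_pos_of_pos (Real.rpow_pos_of_pos hdpos q) _).le
                  have n3 : (0:ℝ) ≤ max C 1 := by positivity
                  have n4 : (0:ℝ) ≤ μ ^ (-p) := (Real.rpow_pos_of_pos hμpos _).le
                  exact mul_le_mul (mul_le_mul hC1 hεpart n1 n3) hdpart n2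
                    (mul_nonneg n3 n4)
          -- b ≤ j * (m + 1) ≤ j * C4 ≤ 3 log d * C4
          have hbb : ((d - a d : ℕ):ℝ) ≤ (j:ℝ) * ((m:ℝ) + 1) := by
            have e1 : j * m + (d - a d) % j = d - a d := by
              rw [hmdef]
              exact Nat.div_add_mod _ _
            have e2 : (d - a d) % j < j := Nat.mod_lt _ (by omega)
            have e1R : (j:ℝ) * (m:ℝ) + (((d - a d) % j : ℕ):ℝ) = ((d - a d : ℕ):ℝ) := by
              exact_mod_cast e1
            have e2R : (((d - a d) % j : ℕ):ℝ) < (j:ℝ) := by exact_mod_cast e2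
            nlinarith
          have hmC4 : (m:ℝ) + 1 ≤ C4 := by rw [hC4]; linarith
          calc ((d - a d : ℕ):ℝ) ≤ (j:ℝ) * ((m:ℝ) + 1) := hbb
            _ ≤ (j:ℝ) * C4 := mul_le_mul_of_nonneg_left hmC4 hjpos.le
            _ ≤ (3 * Real.log d) * C4 := mul_le_mul_of_nonneg_right hj3 hC4pos.le
            _ = 3 * C4 * Real.log d := by ring
    · rintro ⟨⟨τ0, hτ0, hsum⟩, c, hcpos, hclog⟩
      have hdecay := decay_of_summable Λ hnn τ0 hτ0 hsum
      obtain ⟨K1, hK1⟩ := hdecay (Λ 1 / 2) (by positivity)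
      set s := max K1 1 with hsdef
      have hs1 : 1 ≤ s := le_max_right _ _
      have hls : Λ (s+1) < Λ 1 := by
        have h3 := hK1 (s+1) (by have := le_max_left K1 1; omega)
        linarith
      obtain ⟨t, ht, htail⟩ := choose_t Λ hnn hmono h1pos τ0 hτ0 hsum s hs1 hls
      have hs1R : (1:ℝ) ≤ (s:ℝ) + 1 := by
        have : (0:ℝ) ≤ (s:ℝ) := Nat.cast_nonneg s
        linarith
      have hlogs : 0 ≤ Real.log ((s:ℝ)+1) := Real.log_nonneg hs1R
      refine ⟨2 * 2^(s-1), 2*t, ((s-1 : ℕ):ℝ) + c * Real.log ((s:ℝ)+1),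
        by positivity, by positivity,
        add_nonneg (Nat.cast_nonneg _) (mul_nonneg hcpos.le hlogs),
        fun d hd1 ε' hε0 hε1 => ?_⟩
      obtain ⟨hfin, hbound⟩ := UB Λ hnn hmono h1pos a t ht s hs1 htail hdecay d hd1
        (ha d hd1).2 ε' hε0 hε1
      refine ⟨hfin, le_trans hbound ?_⟩
      have hεp : (0:ℝ) < ε' ^ (-(2 * t)) := Real.rpow_pos_of_pos hε0 _
      have hdR1 : (1:ℝ) ≤ (d:ℝ) := by exact_mod_cast hd1
      have hdpos : (0:ℝ) < (d:ℝ) := by linarith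
      have key1 : ((d:ℝ)+1)^(s-1) ≤ 2^(s-1) * (d:ℝ) ^ (((s-1:ℕ)):ℝ) := by
        rw [Real.rpow_natCast]
        calc ((d:ℝ)+1)^(s-1) ≤ (2*(d:ℝ))^(s-1) :=
              pow_le_pow_left₀ (by linarith) (by linarith) _
          _ = 2^(s-1) * (d:ℝ)^(s-1) := mul_pow _ _ _
      have key2 : ((s:ℝ)+1)^(d - a d) ≤ (d:ℝ) ^ (c * Real.log ((s:ℝ)+1)) := by
        rcases eq_or_lt_of_le hd1 with hd1' | hd2
        · have hd1'' : d = 1 := hd1'.symm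
          subst hd1''
          have ha1 : a 1 = 1 := by have := ha 1 le_rfl; omega
          rw [ha1]
          simp [Real.one_rpow]
        · have hb := hclog d (by omega)
          have hlogd : 0 ≤ Real.log d := Real.log_nonneg hdR1
          rw [Real.rpow_def_of_pos hdpos,
            ← Real.rpow_natCast ((s:ℝ)+1) (d - a d),
            Real.rpow_def_of_pos (by linarith : (0:ℝ) < (s:ℝ)+1)]
          apply Real.exp_le_exp.2
          have h6 := mul_le_mul_of_nonneg_left hb hlogs
          nlinarith
      calc ε' ^ (-(2*t)) * (2 * ((d:ℝ)+1)^(s-1) * ((s:ℝ)+1)^(d - a d))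
          ≤ ε' ^ (-(2*t)) * (2 * (2^(s-1) * (d:ℝ) ^ (((s-1:ℕ)):ℝ)) *
              (d:ℝ) ^ (c * Real.log ((s:ℝ)+1))) := by
            refine mul_le_mul_of_nonneg_left ?_ hεp.le
            refine mul_le_mul (by
                refine mul_le_mul_of_nonneg_left key1 (by norm_num)) key2
              (by positivity) (by positivity)
        _ = 2 * 2^(s-1) * ε' ^ (-(2*t)) *
              ((d:ℝ) ^ (((s-1:ℕ)):ℝ) * (d:ℝ) ^ (c * Real.log ((s:ℝ)+1))) := by ring
        _ = 2 * 2^(s-1) * ε' ^ (-(2*t)) * (d:ℝ) ^ ((((s-1:ℕ)):ℝ) + c * Real.log ((s:ℝ)+1)) := by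
            rw [← Real.rpow_add hdpos]
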